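/- The average update rate C(n) = (1−α)β^{n−1} / [(1−a)(1 + (1−α)(1−β^n)/(1−β) + (1−α)aβ^{n−1}/(1−a))], defined for integers n ≥ 1 with parameters α ∈ [0,1), a, β ∈ (0,1), a < β, is strictly decreasing in n. -/
import Mathlib
set_option maxHeartbeats 1000000


theorem stmt5 (α β a : ℝ) (hα0 : 0 ≤ α) (hα1 : α < 1)
    (hβ : β ∈ Set.Ioo (0 : ℝ) 1) (ha : a ∈ Set.Ioo (0 : ℝ) 1) (hab : a < β)
    (C : ℕ → ℝ)
    (hC : ∀ n : ℕ, 1 ≤ n → C n =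
      (1 - α) * β ^ (n - 1) /
        ((1 - a) * (1 + (1 - α) * (1 - β ^ n) / (1 - β) +
          (1 - α) * a * β ^ (n - 1) / (1 - a)))) :
    StrictAntiOn C (Set.Ici 1) := by
  obtain ⟨hβ0, hβ1⟩ := hβ
  obtain ⟨ha0, ha1⟩ := ha
  have hα : 0 < 1 - α := by linarith
  have hb : 0 < 1 - β := by linarith
  have haa : 0 < 1 - a := by linarith
  have key : ∀ k : ℕ, C (k + 2) < C (k + 1) := by
    intro k
    have h1 := hC (k + 1) (by omega)
    have h2 := hC (k + 2) (by omega)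
    have e1 : (k + 1 : ℕ) - 1 = k := by omega
    have e2 : (k + 2 : ℕ) - 1 = k + 1 := by omega
    rw [e1] at h1
    rw [e2] at h2
    have hxpos : 0 < β ^ k := pow_pos hβ0 k
    have hxle : β ^ k ≤ 1 := pow_le_one₀ hβ0.le hβ1.le
    set x := β ^ k with hx
    have p1 : β ^ (k + 1) = β * x := by rw [pow_succ, mul_comm]
    have p2 : β ^ (k + 2) = β * (β * x) := by rw [pow_succ, pow_succ, hx]; ring
    rw [p1] at h1 h2
    rw [p2] at h2
    clear_value x
    rw [h1, h2]
    have hbx1 : β * x ≤ 1 := by nlinarith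
    have hbbx1 : β * (β * x) ≤ 1 := by nlinarith
    set D1 := (1 - a) * (1 + (1 - α) * (1 - β * x) / (1 - β) +
        (1 - α) * a * x / (1 - a)) with hD1def
    set D2 := (1 - a) * (1 + (1 - α) * (1 - β * (β * x)) / (1 - β) +
        (1 - α) * a * (β * x) / (1 - a)) with hD2def
    have hD1 : 0 < D1 := by
      apply mul_pos haa
      have t1 : 0 ≤ (1 - α) * (1 - β * x) / (1 - β) :=
        div_nonneg (by nlinarith) hb.le
      have t2 : 0 ≤ (1 - α) * a * x / (1 - a) :=
        div_nonneg (by nlinarith [mul_pos (mul_pos hα ha0) hxpos]) haa.le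
      linarith
    have hD2 : 0 < D2 := by
      apply mul_pos haa
      have t1 : 0 ≤ (1 - α) * (1 - β * (β * x)) / (1 - β) :=
        div_nonneg (by nlinarith) hb.le
      have t2 : 0 ≤ (1 - α) * a * (β * x) / (1 - a) :=
        div_nonneg (by nlinarith [mul_pos (mul_pos (mul_pos hα ha0) hβ0) hxpos]) haa.le
      linarith
    rw [div_lt_div_iff₀ hD2 hD1]
    have hb' : (1 - β) ≠ 0 := ne_of_gt hb
    have ha' : (1 - a) ≠ 0 := ne_of_gt haa
    have hdiff : D2 - β * D1 = (1 - a) * (1 - β) + (1 - a) * (1 - α) := by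
      rw [hD1def, hD2def]
      field_simp
      ring
    have hkey : β * D1 < D2 := by nlinarith [mul_pos haa hb, mul_pos haa hα]
    have hpos : 0 < (1 - α) * x := mul_pos hα hxpos
    calc (1 - α) * (β * x) * D1 = (1 - α) * x * (β * D1) := by ring
      _ < (1 - α) * x * D2 := by exact (mul_lt_mul_iff_right₀ hpos).mpr hkey
  have step : ∀ m : ℕ, 1 ≤ m → ∀ n : ℕ, m < n → C n < C m := by
    intro m hm n hmn
    induction n with
    | zero => omega
    | succ p ih =>
      rcases Nat.lt_or_ge m p with h | h
      · have hp1 : 1 ≤ p := by omega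
        obtain ⟨j, rfl⟩ := Nat.exists_eq_add_of_le hp1
        have h1 : C (1 + j + 1) < C (1 + j) := by
          have := key j
          have e1 : j + 2 = 1 + j + 1 := by omega
          have e2 : j + 1 = 1 + j := by omega
          rwa [e1, e2] at this
        exact lt_trans h1 (ih (by omega))
      · have : m = p := by omega
        subst this
        obtain ⟨j, rfl⟩ := Nat.exists_eq_add_of_le hm
        have e : 1 + j = j + 1 := by omega
        rw [e]
        simpa using key j
  intro m hm n hn hmn
  exact step m hm n hmn
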